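/- Let (Γ₁, Γ₂, τ) be any Belavin–Drinfeld triple, q > 0 with q ≠ 1, and r⁰ = Σr⁰_{ij}E_{ii}⊗E_{jj} any matrix with r⁰_{ij} = −r⁰_{ji} ∈ ℂ. Then R_J = q^{r⁰} J⁻¹ R_s J₂₁ q^{r⁰} satisfies the Hecke relation: (P·R_J − q)(P·R_J + q⁻¹) = 0. -/

import Mathlib

namespace GGS

open Finset
open scoped Classical

noncomputable section

/-- `n × n` complex matrices, `Mat_n(ℂ)`. -/
abbrev MatN (n : ℕ) := Matrix (Fin n) (Fin n) ℂ
/-- `Mat_n(ℂ) ⊗ Mat_n(ℂ)`, realized as matrices indexed by pairs. -/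
abbrev MatT (n : ℕ) := Matrix (Fin n × Fin n) (Fin n × Fin n) ℂ
/-- `Mat_n(ℂ)^{⊗3}`. -/
abbrev MatT3 (n : ℕ) := Matrix (Fin n × Fin n × Fin n) (Fin n × Fin n × Fin n) ℂ

/-- Matrix unit `E_{ij}` (ℕ-indices; `0` if out of range). -/
def E (n i j : ℕ) : MatN n := fun a b => if (a : ℕ) = i ∧ (b : ℕ) = j then 1 else 0

/-- Tensor (Kronecker) product of two `n × n` matrices. -/
def tens {n : ℕ} (A B : MatN n) : MatT n := fun p q => A p.1 q.1 * B p.2 q.2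

/-- `M₂₁` : swap of the two tensor factors. -/
def swap21 {n : ℕ} (M : MatT n) : MatT n := fun p q => M (p.2, p.1) (q.2, q.1)

/-- The permutation (Casimir) element `P = Σ E_{ij} ⊗ E_{ji}`. -/
def Pm (n : ℕ) : MatT n := ∑ i ∈ range n, ∑ j ∈ range n, tens (E n i j) (E n j i)

/-- `P⁰ = Σ E_{ii} ⊗ E_{ii}`. -/
def P0 (n : ℕ) : MatT n := ∑ i ∈ range n, tens (E n i i) (E n i i)

/-- `M₁₂ = M ⊗ 1`. -/
def lift12 {n : ℕ} (M : MatT n) : MatT3 n :=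
  fun p q => M (p.1, p.2.1) (q.1, q.2.1) * (if p.2.2 = q.2.2 then 1 else 0)

/-- `M₁₃`. -/
def lift13 {n : ℕ} (M : MatT n) : MatT3 n :=
  fun p q => M (p.1, p.2.2) (q.1, q.2.2) * (if p.2.1 = q.2.1 then 1 else 0)

/-- `M₂₃ = 1 ⊗ M`. -/
def lift23 {n : ℕ} (M : MatT n) : MatT3 n :=
  fun p q => M (p.2.1, p.2.2) (q.2.1, q.2.2) * (if p.1 = q.1 then 1 else 0)

/-- The quantum Yang–Baxter equation `R₁₂R₁₃R₂₃ = R₂₃R₁₃R₁₂`. -/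
def QYBE {n : ℕ} (M : MatT n) : Prop :=
  lift12 M * lift13 M * lift23 M = lift23 M * lift13 M * lift12 M

/-- The Hecke relation `(PR − q)(PR + q⁻¹) = 0`. -/
def Hecke {n : ℕ} (q : ℝ) (M : MatT n) : Prop :=
  (Pm n * M - (q : ℂ) • (1 : MatT n)) * (Pm n * M + (q : ℂ)⁻¹ • (1 : MatT n)) = 0

/-- Standard basis vector `e_i` of `ℂⁿ` (as a function on indices). -/
def evec (i : ℕ) : ℕ → ℂ := fun k => if k = i then 1 else 0
/-- The root vector `e_i − e_j`. -/
def rvec (i j : ℕ) : ℕ → ℂ := evec i - evec j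
/-- The simple root `α_i = e_i − e_{i+1}` (0-based indexing). -/
def svec (i : ℕ) : ℕ → ℂ := rvec i (i + 1)
/-- The inner product on `ℂⁿ` for which `(e_i)` is orthonormal (restricted to real vectors). -/
def ipn (n : ℕ) (x y : ℕ → ℂ) : ℂ := ∑ k ∈ range n, x k * y k

/-- A Belavin–Drinfeld triple of type `A_{n−1}`; simple roots are indexed `0,…,n−2`
(0-based: index `i` stands for `α_i = e_i − e_{i+1}`). -/
structure BDTriple (n : ℕ) where
  Γ1 : Finset ℕ
  Γ2 : Finset ℕ
  τ : ℕ → ℕ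
  mem1 : ∀ i ∈ Γ1, i + 1 < n
  mem2 : ∀ i ∈ Γ2, i + 1 < n
  bij : Set.BijOn τ ↑Γ1 ↑Γ2
  isometry : ∀ i ∈ Γ1, ∀ j ∈ Γ1, ipn n (svec (τ i)) (svec (τ j)) = ipn n (svec i) (svec j)
  nilp : ∀ i ∈ Γ1, ∃ k ≥ 1, τ^[k] i ∉ Γ1

variable {n : ℕ}

/-- The positive root `e_i − e_j` (`i < j`) lies in `Γ̃₁` (the positive part of `Span Γ₁`). -/
def SpanRoot (T : BDTriple n) (i j : ℕ) : Prop :=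
  i < j ∧ ∀ k, i ≤ k → k < j → k ∈ T.Γ1

/-- `q = τ(p)` for positive roots, via the additive extension of `τ` to `Γ̃₁`. -/
def tauStep (T : BDTriple n) (p q : ℕ × ℕ) : Prop :=
  SpanRoot T p.1 p.2 ∧ q.1 < q.2 ∧ rvec q.1 q.2 = ∑ k ∈ Finset.Ico p.1 p.2, svec (T.τ k)

/-- `q = τᵏ(p)`. -/
def precK (T : BDTriple n) : ℕ → ℕ × ℕ → ℕ × ℕ → Prop
  | 0, p, q => p = q
  | k + 1, p, q => ∃ r, tauStep T p r ∧ precK T k r q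

/-- `p ≺ q`, i.e. `q = τᵏ p` for some `k ≥ 1`. -/
def prec (T : BDTriple n) (p q : ℕ × ℕ) : Prop := ∃ k, precK T (k + 1) p q

/-- `p ≺← q` : `q = τᵏ p` and `τᵏ` reverses orientation on `p`. -/
def RevOri (T : BDTriple n) (p q : ℕ × ℕ) : Prop :=
  ∃ k, precK T (k + 1) p q ∧ T.τ^[k + 1] p.1 = q.2 - 1

/-- `p ≺→ q` : `q = τᵏ p` and `τᵏ` preserves orientation on `p`. -/
def PresOri (T : BDTriple n) (p q : ℕ × ℕ) : Prop :=
  ∃ k, precK T (k + 1) p q ∧ T.τ^[k + 1] p.1 = q.1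

/-- `sign(α,β)` : `(−1)^{1−|α|}` in the orientation-reversing case, `1` otherwise. -/
def sgn (T : BDTriple n) (p q : ℕ × ℕ) : ℂ :=
  if RevOri T p q then (-1 : ℂ) ^ (p.2 - p.1 - 1) else 1

/-- Sum over all pairs of (would-be) positive roots with indices `< n`. -/
def sumRoots (n : ℕ) (f : ℕ × ℕ → ℕ × ℕ → MatT n) : MatT n :=
  ∑ i ∈ range n, ∑ j ∈ range n, ∑ k ∈ range n, ∑ l ∈ range n, f (i, j) (k, l)

/-- `a = Σ_{α≺β} sign(α,β) (e_{−α} ⊗ e_β − e_β ⊗ e_{−α})`. -/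
def aMat (T : BDTriple n) : MatT n :=
  sumRoots n fun p q =>
    if prec T p q then
      sgn T p q • (tens (E n p.2 p.1) (E n q.1 q.2) - tens (E n q.1 q.2) (E n p.2 p.1))
    else 0

/-- `r_s = ½ P⁰ + Σ_{α>0} e_{−α} ⊗ e_α`. -/
def rsMat (n : ℕ) : MatT n :=
  (1 / 2 : ℂ) • P0 n +
    ∑ i ∈ range n, ∑ j ∈ range n, if i < j then tens (E n j i) (E n i j) else 0

/-- `ε = a r_s + r_s a + a²`. -/
def epsMat (T : BDTriple n) : MatT n :=
  aMat T * rsMat n + rsMat n * aMat T + aMat T * aMat T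

/-- Entry of a tensor-square matrix, with ℕ indices. -/
def entry (M : MatT n) (a b c d : ℕ) : ℂ :=
  if h : a < n ∧ b < n ∧ c < n ∧ d < n then
    M (⟨a, h.1⟩, ⟨b, h.2.1⟩) (⟨c, h.2.2.1⟩, ⟨d, h.2.2.2⟩)
  else 0

/-- The coefficient of `e_β ⊗ e_{−α}` in `M` (here `p = α`, `q = β`). -/
def coeffBA (M : MatT n) (p q : ℕ × ℕ) : ℂ := entry M q.1 p.2 q.2 p.1

/-- `q^z = exp(z · ln q)`. -/
def qpow (q : ℝ) (z : ℂ) : ℂ := Complex.exp (z * (Real.log q : ℂ))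

/-- The coefficients `K_{α,β}`. -/
def Kc (T : BDTriple n) (p q : ℕ × ℕ) : ℂ :=
  (if p.2 = q.1 then (1 / 2 : ℂ) else 0) - (if q.2 = p.1 then (1 / 2 : ℂ) else 0)
    + (if ∃ g : ℕ × ℕ, prec T p g ∧ prec T g q ∧ p.2 = g.1 then 1 else 0)
    - (if ∃ g : ℕ × ℕ, prec T p g ∧ prec T g q ∧ g.2 = p.1 then 1 else 0)
    + (if RevOri T p q then 1 - ((p.2 - p.1 : ℕ) : ℂ) else 0)

/-- `Jⁱ = 1 + (q − q⁻¹) Σ_{β = τⁱα} sign(α,β) q^{K_{α,β}} e_β ⊗ e_{−α}`. -/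
def Jlevel (q : ℝ) (T : BDTriple n) (i : ℕ) : MatT n :=
  1 + sumRoots n fun p r =>
    if precK T i p r then
      (((q : ℂ) - (q : ℂ)⁻¹) * sgn T p r * qpow q (Kc T p r)) • tens (E n r.1 r.2) (E n p.2 p.1)
    else 0

/-- `J = J¹ J² ⋯` (levels beyond the maximal power of `τ` contribute the identity). -/
def Jmat (q : ℝ) (T : BDTriple n) : MatT n :=
  ((List.range n).map fun i => Jlevel q T (i + 1)).prod

/-- The standard Drinfeld–Jimbo `R`-matrix `R_s`. -/
def RsQ (n : ℕ) (q : ℝ) : MatT n :=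
  (q : ℂ) • P0 n
    + (∑ i ∈ range n, ∑ j ∈ range n, if i ≠ j then tens (E n i i) (E n j j) else 0)
    + ((q : ℂ) - (q : ℂ)⁻¹) •
        (∑ i ∈ range n, ∑ j ∈ range n, if j < i then tens (E n i j) (E n j i) else 0)

/-- `e_{−α} ∧_c e_β = q^{−c} e_{−α} ⊗ e_β − q^c e_β ⊗ e_{−α}` (`p = α`, `r = β`). -/
def wedgeC {n : ℕ} (q : ℝ) (c : ℂ) (p r : ℕ × ℕ) : MatT n :=
  qpow q (-c) • tens (E n p.2 p.1) (E n r.1 r.2) - qpow q c • tens (E n r.1 r.2) (E n p.2 p.1)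

/-- `R̄_GGS = R_s + (q−q⁻¹) Σ_{α≺β} sign(α,β) e_{−α} ∧_{−sign(α,β) ε_{α,β}} e_β`. -/
def RbarGGS (q : ℝ) (T : BDTriple n) : MatT n :=
  RsQ n q + ((q : ℂ) - (q : ℂ)⁻¹) •
    sumRoots n fun p r =>
      if prec T p r then
        sgn T p r • wedgeC q (-(sgn T p r) * coeffBA (epsMat T) p r) p r
      else 0

/-- `R̄_J = J⁻¹ R_s J₂₁`. -/
def RbarJ (q : ℝ) (T : BDTriple n) : MatT n :=
  (Jmat q T)⁻¹ * RsQ n q * swap21 (Jmat q T)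

/-- `q^{r⁰}` for a diagonal⊗diagonal `r⁰`. -/
def qr0 (n : ℕ) (q : ℝ) (r0 : ℕ → ℕ → ℂ) : MatT n :=
  ∑ i ∈ range n, ∑ j ∈ range n, qpow q (r0 i j) • tens (E n i i) (E n j j)

/-- `R_GGS = q^{r⁰} R̄_GGS q^{r⁰}`. -/
def RGGS (q : ℝ) (T : BDTriple n) (r0 : ℕ → ℕ → ℂ) : MatT n :=
  qr0 n q r0 * RbarGGS q T * qr0 n q r0

/-- `R_J = q^{r⁰} R̄_J q^{r⁰}`. -/
def RJ (q : ℝ) (T : BDTriple n) (r0 : ℕ → ℕ → ℂ) : MatT n :=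
  qr0 n q r0 * RbarJ q T * qr0 n q r0

/-- `r⁰ ∈ 𝔥 ∧ 𝔥`, i.e. the coefficient matrix is antisymmetric. -/
def Antisym (n : ℕ) (r0 : ℕ → ℕ → ℂ) : Prop := ∀ i < n, ∀ j < n, r0 i j = -r0 j i

/-- The Belavin–Drinfeld compatibility equations
`((α − τα) ⊗ 1) r⁰ = ½ ((α + τα) ⊗ 1) P⁰` for all `α ∈ Γ₁`, written componentwise. -/
def Compat (T : BDTriple n) (r0 : ℕ → ℕ → ℂ) : Prop :=
  ∀ s ∈ T.Γ1, ∀ j < n,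
    r0 s j - r0 (s + 1) j - r0 (T.τ s) j + r0 (T.τ s + 1) j
      = (1 / 2 : ℂ) *
        ((if j = s then 1 else 0) - (if j = s + 1 then 1 else 0)
          + (if j = T.τ s then 1 else 0) - (if j = T.τ s + 1 then 1 else 0))

/-- `a₊ⁱ` : the part of `a₊` supported on pairs with `β = τⁱα`. -/
def aPlusLev (T : BDTriple n) (i : ℕ) : MatT n :=
  sumRoots n fun p r =>
    if precK T i p r then (-(sgn T p r)) • tens (E n r.1 r.2) (E n p.2 p.1) else 0

/-- `a₊ = Σ_{α≺β} (−sign(α,β)) e_β ⊗ e_{−α}`. -/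
def aPlus (T : BDTriple n) : MatT n :=
  sumRoots n fun p r =>
    if prec T p r then (-(sgn T p r)) • tens (E n r.1 r.2) (E n p.2 p.1) else 0

/-- `a₋ = Σ_{α≺β} sign(α,β) e_{−α} ⊗ e_β`. -/
def aMinus (T : BDTriple n) : MatT n :=
  sumRoots n fun p r =>
    if prec T p r then sgn T p r • tens (E n p.2 p.1) (E n r.1 r.2) else 0

/-- `P₊ = Σ_{i<j} E_{ij}⊗E_{ji} + ½P⁰`. -/
def PPlus (n : ℕ) : MatT n :=
  (∑ i ∈ range n, ∑ j ∈ range n, if i < j then tens (E n i j) (E n j i) else 0)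
    + (1 / 2 : ℂ) • P0 n

/-- `P₋ = Σ_{i>j} E_{ij}⊗E_{ji} + ½P⁰`. -/
def PMinus (n : ℕ) : MatT n :=
  (∑ i ∈ range n, ∑ j ∈ range n, if j < i then tens (E n i j) (E n j i) else 0)
    + (1 / 2 : ℂ) • P0 n

/-- The matrix `Σ_{i≥j} a₊ⁱa₊ʲ − Σ_{i<j} a₊ⁱa₊ʲ + a₊P₋ + a₋P₊ + P₊a₊ + a₊a₋ − a₋a₊`. -/
def Mmat (T : BDTriple n) : MatT n :=
  (∑ i ∈ range n, ∑ j ∈ range n, if j ≤ i then aPlusLev T (i + 1) * aPlusLev T (j + 1) else 0)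
    - (∑ i ∈ range n, ∑ j ∈ range n, if i < j then aPlusLev T (i + 1) * aPlusLev T (j + 1) else 0)
    + aPlus T * PMinus n + aMinus T * PPlus n + PPlus n * aPlus T
    + aPlus T * aMinus T - aMinus T * aPlus T

/-- `L_{α,β}` : `½` if `α ⋖ β`, `−½` if `α ⋗ β`, `0` otherwise. -/
def Lc (p r : ℕ × ℕ) : ℂ :=
  if p.2 = r.1 then 1 / 2 else if r.2 = p.1 then -(1 / 2) else 0

/-- The part of `M` (viewed on the basis `e_{τα} ⊗ e_{−α}`, `α ∈ Γ̃₁`) supported on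
pairs with `α ⋗ τα`. -/
def partGtr (T : BDTriple n) (M : MatT n) : MatT n :=
  sumRoots n fun p r =>
    if tauStep T p r ∧ r.2 = p.1 then coeffBA M p r • tens (E n r.1 r.2) (E n p.2 p.1) else 0

/-- The part of `M` (viewed on the basis `e_{−α} ⊗ e_{τα}`, `α ∈ Γ̃₁`) supported on
pairs with `α ⋖ τα`. -/
def partLess21 (T : BDTriple n) (M : MatT n) : MatT n :=
  sumRoots n fun p r =>
    if tauStep T p r ∧ p.2 = r.1 then
      entry M p.2 r.1 p.1 r.2 • tens (E n p.2 p.1) (E n r.1 r.2)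
    else 0


section Aux

lemma qpow_add (q : ℝ) (a b : ℂ) : qpow q (a + b) = qpow q a * qpow q b := by
  simp [qpow, add_mul, Complex.exp_add]

lemma qpow_zero (q : ℝ) : qpow q 0 = 1 := by simp [qpow]

variable {n : ℕ}

lemma collapse1 (a : Fin n) (f : ℕ → ℂ)
    (h0 : ∀ i, (a : ℕ) ≠ i → f i = 0) :
    (∑ i ∈ range n, f i) = f a := by
  rw [Finset.sum_eq_single (a : ℕ)]
  · intro i _ hi; exact h0 i (fun h => hi (h.symm))
  · intro ha; exact absurd (Finset.mem_range.mpr a.isLt) ha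

lemma collapse2 (a b : Fin n) (f : ℕ → ℕ → ℂ)
    (h0 : ∀ i j, ¬((a : ℕ) = i ∧ (b : ℕ) = j) → f i j = 0) :
    (∑ i ∈ range n, ∑ j ∈ range n, f i j) = f a b := by
  rw [Finset.sum_eq_single (a : ℕ)]
  · rw [Finset.sum_eq_single (b : ℕ)]
    · intro j _ hj; exact h0 _ _ (by tauto)
    · intro hb; exact absurd (Finset.mem_range.mpr b.isLt) hb
  · intro i _ hi; exact Finset.sum_eq_zero fun j _ => h0 _ _ (by tauto)
  · intro ha; exact absurd (Finset.mem_range.mpr a.isLt) ha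

lemma Pm_apply (p r : Fin n × Fin n) :
    Pm n p r = if r = (p.2, p.1) then 1 else 0 := by
  rw [Pm, Matrix.sum_apply]
  simp only [Matrix.sum_apply]
  rw [collapse2 p.1 p.2 _ (fun i j hij => ?_)]
  · simp only [tens, E]
    split_ifs with h1 h2 h3 h2 <;>
      simp_all [Prod.ext_iff, Fin.val_inj] <;> tauto
  · simp only [tens, E]
    split_ifs with h1 h2 <;> simp_all <;> tauto

end Aux

section Aux2
variable {n : ℕ}

lemma Pm_mul_apply (M : MatT n) (p q : Fin n × Fin n) :
    (Pm n * M) p q = M (p.2, p.1) q := by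
  rw [Matrix.mul_apply]
  simp only [Pm_apply, ite_mul, one_mul, zero_mul]
  rw [Finset.sum_ite_eq' Finset.univ ((p.2, p.1) : Fin n × Fin n) (fun r => M r q)]
  simp

lemma mul_Pm_apply (M : MatT n) (p q : Fin n × Fin n) :
    (M * Pm n) p q = M p (q.2, q.1) := by
  rw [Matrix.mul_apply]
  have : ∀ r : Fin n × Fin n, M p r * Pm n r q
      = if r = (q.2, q.1) then M p r else 0 := by
    intro r
    rw [Pm_apply]
    by_cases h : q = (r.2, r.1)
    · rw [if_pos h, if_pos (by simp [Prod.ext_iff] at h ⊢; tauto), mul_one]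
    · rw [if_neg h, if_neg (by simp [Prod.ext_iff] at h ⊢; tauto), mul_zero]
  rw [Finset.sum_congr rfl (fun r _ => this r)]
  rw [Finset.sum_ite_eq' Finset.univ ((q.2, q.1) : Fin n × Fin n) (fun r => M p r)]
  simp

lemma Pm_mul (M : MatT n) : Pm n * M = swap21 M * Pm n := by
  ext p q
  rw [Pm_mul_apply, mul_Pm_apply]
  rfl

lemma Pm_shift (X Y : MatT n) : Pm n * (X * Y) = swap21 X * (Pm n * Y) := by
  rw [← mul_assoc, Pm_mul, mul_assoc]

lemma swap21_mul (M N : MatT n) : swap21 (M * N) = swap21 M * swap21 N := by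
  ext p q
  simp only [swap21, Matrix.mul_apply]
  exact Fintype.sum_equiv (Equiv.prodComm (Fin n) (Fin n)) _ _ (fun r => rfl)

lemma swap21_one : swap21 (1 : MatT n) = 1 := by
  ext p q
  simp only [swap21, Matrix.one_apply, Prod.ext_iff]
  split_ifs <;> first | rfl | tauto

lemma swap21_swap21 (M : MatT n) : swap21 (swap21 M) = M := rfl

end Aux2

section Aux3
variable {n : ℕ}

lemma P0_apply (p r : Fin n × Fin n) :
    P0 n p r = if p.1 = p.2 ∧ r = p then 1 else 0 := by
  rw [P0, Matrix.sum_apply]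
  rw [collapse1 p.1 _ (fun i hi => ?_)]
  · simp only [tens, E]
    split_ifs <;> simp_all [Prod.ext_iff, Fin.val_inj] <;> tauto
  · simp only [tens, E]
    split_ifs <;> simp_all <;> tauto

lemma RsQ_apply (q : ℝ) (p r : Fin n × Fin n) :
    RsQ n q p r =
      (if r = p then (if p.1 = p.2 then (q : ℂ) else 1) else 0)
        + (if (p.2 : ℕ) < (p.1 : ℕ) ∧ r = (p.2, p.1) then ((q : ℂ) - (q : ℂ)⁻¹) else 0) := by
  rw [RsQ]
  simp only [Matrix.add_apply, Matrix.smul_apply, Matrix.sum_apply, smul_eq_mul]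
  rw [P0_apply]
  rw [collapse2 p.1 p.2 (fun i j => (if i ≠ j then tens (E n i i) (E n j j) else (0 : MatT n)) p r)
    (fun i j hij => ?_)]
  rotate_left
  · split_ifs with hc
    · simp only [tens, E]; split_ifs <;> simp_all <;> tauto
    · simp
  rw [collapse2 p.1 p.2 (fun i j => (if j < i then tens (E n i j) (E n j i) else (0 : MatT n)) p r)
    (fun i j hij => ?_)]
  rotate_left
  · split_ifs with hc
    · simp only [tens, E]; split_ifs <;> simp_all <;> tauto
    · simp
  simp only [apply_ite (fun M : MatT n => M p r), Matrix.zero_apply, tens, E]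
  have hr : (r = p) ↔ ((r.1 : ℕ) = (p.1 : ℕ) ∧ (r.2 : ℕ) = (p.2 : ℕ)) := by
    simp [Prod.ext_iff, Fin.val_inj]
  have hr2 : (r = (p.2, p.1)) ↔ ((r.1 : ℕ) = (p.2 : ℕ) ∧ (r.2 : ℕ) = (p.1 : ℕ)) := by
    simp [Prod.ext_iff, Fin.val_inj]
  have hp : (p.1 = p.2) ↔ ((p.1 : ℕ) = (p.2 : ℕ)) := Fin.val_inj.symm
  simp only [hr, hr2, hp, true_and]
  split_ifs <;> first | ring1 | (exfalso; omega)

end Aux3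

section Aux4
variable {n : ℕ}

lemma PmRs_apply (q : ℝ) (p r : Fin n × Fin n) :
    (Pm n * RsQ n q) p r =
      (if r = (p.2, p.1) then (if p.1 = p.2 then (q : ℂ) else 1) else 0)
        + (if r = p then (if (p.1 : ℕ) < (p.2 : ℕ) then ((q : ℂ) - (q : ℂ)⁻¹) else 0) else 0) := by
  rw [Pm_mul_apply, RsQ_apply]
  have h1 : (((p.2, p.1) : Fin n × Fin n).2, ((p.2, p.1) : Fin n × Fin n).1) = p := rfl
  rw [h1]
  congr 1
  · congr 1
    exact if_congr (by constructor <;> (intro h; exact h.symm)) rfl rfl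
  · split_ifs <;> first | rfl | tauto

lemma hecke_sq (q : ℝ) (hq0 : (q : ℂ) ≠ 0) :
    (Pm n * RsQ n q) * (Pm n * RsQ n q)
      = ((q : ℂ) - (q : ℂ)⁻¹) • (Pm n * RsQ n q) + 1 := by
  ext p s
  rw [Matrix.mul_apply]
  have step : ∀ r : Fin n × Fin n,
      (Pm n * RsQ n q) p r * (Pm n * RsQ n q) r s
        = (if r = (p.2, p.1) then (if p.1 = p.2 then (q : ℂ) else 1) * (Pm n * RsQ n q) r s else 0)
          + (if r = p then
              (if (p.1 : ℕ) < (p.2 : ℕ) then ((q : ℂ) - (q : ℂ)⁻¹) else 0) * (Pm n * RsQ n q) r s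
            else 0) := by
    intro r
    rw [PmRs_apply]
    split_ifs <;> ring
  rw [Finset.sum_congr rfl (fun r _ => step r), Finset.sum_add_distrib,
    Finset.sum_ite_eq' Finset.univ ((p.2, p.1) : Fin n × Fin n),
    Finset.sum_ite_eq' Finset.univ p]
  simp only [Finset.mem_univ, if_true]
  rw [PmRs_apply, PmRs_apply]
  have h1 : (((p.2, p.1) : Fin n × Fin n).2, ((p.2, p.1) : Fin n × Fin n).1) = p := rfl
  rw [h1]
  simp only [Matrix.add_apply, Matrix.smul_apply, Matrix.one_apply, smul_eq_mul]
  rw [PmRs_apply]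
  have e1 : (s = p) ↔ ((s.1 : ℕ) = (p.1 : ℕ) ∧ (s.2 : ℕ) = (p.2 : ℕ)) := by
    simp [Prod.ext_iff, Fin.val_inj]
  have e2 : (s = ((p.2, p.1) : Fin n × Fin n)) ↔
      ((s.1 : ℕ) = (p.2 : ℕ) ∧ (s.2 : ℕ) = (p.1 : ℕ)) := by
    simp [Prod.ext_iff, Fin.val_inj]
  have e3 : (p.1 = p.2) ↔ ((p.1 : ℕ) = (p.2 : ℕ)) := Fin.val_inj.symm
  have e4 : (p.2 = p.1) ↔ ((p.2 : ℕ) = (p.1 : ℕ)) := Fin.val_inj.symm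
  have e5 : (p = s) ↔ ((s.1 : ℕ) = (p.1 : ℕ) ∧ (s.2 : ℕ) = (p.2 : ℕ)) := by
    simp [Prod.ext_iff, Fin.val_inj, eq_comm]
  have e6 : (((p.2, p.1) : Fin n × Fin n).1 = ((p.2, p.1) : Fin n × Fin n).2)
      ↔ ((p.2 : ℕ) = (p.1 : ℕ)) := Fin.val_inj.symm
  have e7 : ((((p.2, p.1) : Fin n × Fin n).1 : ℕ) < (((p.2, p.1) : Fin n × Fin n).2 : ℕ))
      ↔ ((p.2 : ℕ) < (p.1 : ℕ)) := Iff.rfl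
  simp only [e1, e2, e3, e4, e5, e6, e7]
  split_ifs <;> first | ring1 | (exfalso; omega) | (field_simp; try ring1)

end Aux4

section Aux5
variable {n : ℕ}

lemma qr0_apply (q : ℝ) (r0 : ℕ → ℕ → ℂ) (p r : Fin n × Fin n) :
    qr0 n q r0 p r = if r = p then qpow q (r0 (p.1 : ℕ) (p.2 : ℕ)) else 0 := by
  rw [qr0, Matrix.sum_apply]
  simp only [Matrix.sum_apply, Matrix.smul_apply, smul_eq_mul]
  rw [collapse2 p.1 p.2 (fun i j => qpow q (r0 i j) * tens (E n i i) (E n j j) p r)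
    (fun i j hij => ?_)]
  · simp only [tens, E]
    split_ifs <;> simp_all [Prod.ext_iff, Fin.val_inj] <;> tauto
  · simp only [tens, E]
    split_ifs <;> simp_all <;> tauto

lemma qr0_mul_swap (q : ℝ) (r0 : ℕ → ℕ → ℂ) (hanti : Antisym n r0) :
    qr0 n q r0 * swap21 (qr0 n q r0) = 1 := by
  ext p s
  rw [Matrix.mul_apply]
  have step : ∀ r : Fin n × Fin n,
      qr0 n q r0 p r * swap21 (qr0 n q r0) r s
        = if r = p then qpow q (r0 (p.1 : ℕ) (p.2 : ℕ)) * swap21 (qr0 n q r0) r s else 0 := by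
    intro r; rw [qr0_apply]; split_ifs <;> ring
  rw [Finset.sum_congr rfl (fun r _ => step r),
    Finset.sum_ite_eq' Finset.univ p (fun r => qpow q (r0 (p.1 : ℕ) (p.2 : ℕ)) * swap21 (qr0 n q r0) r s)]
  simp only [Finset.mem_univ, if_true]
  have hsw : swap21 (qr0 n q r0) p s
      = if s = p then qpow q (r0 (p.2 : ℕ) (p.1 : ℕ)) else 0 := by
    show qr0 n q r0 (p.2, p.1) (s.2, s.1) = _
    rw [qr0_apply]
    exact if_congr (by simp [Prod.ext_iff]; tauto) rfl rfl
  rw [hsw]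
  rw [Matrix.one_apply]
  have hval : r0 (p.2 : ℕ) (p.1 : ℕ) = -(r0 (p.1 : ℕ) (p.2 : ℕ)) := hanti _ p.2.isLt _ p.1.isLt
  split_ifs with h1 h2 h2
  · rw [← qpow_add, hval, add_neg_cancel, qpow_zero]
  · exact absurd h1.symm h2
  · exact absurd h2.symm h1
  · exact mul_zero _

lemma qr0_swap_mul (q : ℝ) (r0 : ℕ → ℕ → ℂ) (hanti : Antisym n r0) :
    swap21 (qr0 n q r0) * qr0 n q r0 = 1 := by
  have := congrArg swap21 (qr0_mul_swap q r0 hanti)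
  rwa [swap21_mul, swap21_swap21, swap21_one] at this

lemma pow_n_zero_of_lt (M : MatT n) (h : ∀ p r, M p r ≠ 0 → (p.1 : ℕ) < (r.1 : ℕ)) :
    M ^ n = 0 := by
  have key : ∀ (k : ℕ) (p r : Fin n × Fin n), (M ^ k) p r ≠ 0 → (p.1 : ℕ) + k ≤ (r.1 : ℕ) := by
    intro k
    induction k with
    | zero =>
      intro p r hpr
      rw [pow_zero, Matrix.one_apply] at hpr
      split_ifs at hpr with hc
      · subst hc; omega
      · exact absurd rfl hpr
    | succ k ih =>
      intro p r hpr
      rw [pow_succ, Matrix.mul_apply] at hpr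
      obtain ⟨u, -, hu⟩ := Finset.exists_ne_zero_of_sum_ne_zero hpr
      have h1 := ih p u (left_ne_zero_of_mul hu)
      have h2 := h u r (right_ne_zero_of_mul hu)
      omega
  ext p r
  rw [Matrix.zero_apply]
  by_contra hc
  have := key n p r hc
  have := r.1.isLt
  omega

lemma precK_snd_lt (T : BDTriple n) :
    ∀ (k : ℕ) (p r : ℕ × ℕ), precK T (k + 1) p r → r.1 < r.2 := by
  intro k
  induction k with
  | zero =>
    rintro p r ⟨s, hs, hsr⟩
    have : s = r := hsr
    subst this
    exact hs.2.1
  | succ k ih =>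
    rintro p r ⟨s, hs, hsr⟩
    exact ih s r hsr

lemma Jmat_isUnit (q : ℝ) (T : BDTriple n) : IsUnit (Jmat q T) := by
  rw [Jmat]
  apply List.prod_isUnit
  intro m hm
  simp only [List.mem_map] at hm
  obtain ⟨i, -, rfl⟩ := hm
  rw [Jlevel]
  refine IsNilpotent.isUnit_one_add ⟨n, pow_n_zero_of_lt _ (fun p r hpr => ?_)⟩
  rw [sumRoots] at hpr
  simp only [Matrix.sum_apply] at hpr
  obtain ⟨a, -, hpr⟩ := Finset.exists_ne_zero_of_sum_ne_zero hpr
  obtain ⟨b, -, hpr⟩ := Finset.exists_ne_zero_of_sum_ne_zero hpr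
  obtain ⟨c, -, hpr⟩ := Finset.exists_ne_zero_of_sum_ne_zero hpr
  obtain ⟨d, -, hpr⟩ := Finset.exists_ne_zero_of_sum_ne_zero hpr
  rw [apply_ite (fun M : MatT n => M p r)] at hpr
  split_ifs at hpr with hP
  · have hcd : c < d := precK_snd_lt T i (a, b) (c, d) hP
    simp only [Matrix.smul_apply, tens, E, smul_eq_mul] at hpr
    split_ifs at hpr with g1 g2 <;> simp_all
  · simp at hpr

end Aux5
/-- `R_J = q^{r⁰} J⁻¹ R_s J₂₁ q^{r⁰}` satisfies the Hecke relation. -/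
theorem stmt_19 {n : ℕ} (hn : 2 ≤ n) (q : ℝ) (hq : 0 < q) (hq1 : q ≠ 1)
    (T : BDTriple n) (r0 : ℕ → ℕ → ℂ) (hanti : Antisym n r0) :
    Hecke q (RJ q T r0) := by
  have hq0 : (q : ℂ) ≠ 0 := by
    exact_mod_cast (ne_of_gt hq)
  set J : MatT n := Jmat q T with hJ
  set K : MatT n := qr0 n q r0 with hK
  set A : MatT n := Pm n * RsQ n q with hA
  set U : MatT n := swap21 J * K with hU
  set V : MatT n := swap21 K * swap21 J⁻¹ with hV
  have hJu : IsUnit J := Jmat_isUnit q T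
  have hJd : IsUnit J.det := (Matrix.isUnit_iff_isUnit_det J).mp hJu
  have hJl : J⁻¹ * J = 1 := Matrix.nonsing_inv_mul J hJd
  have hJr : J * J⁻¹ = 1 := Matrix.mul_nonsing_inv J hJd
  have hK1 : K * swap21 K = 1 := qr0_mul_swap q r0 hanti
  have hK2 : swap21 K * K = 1 := qr0_swap_mul q r0 hanti
  have hVU : V * U = 1 := by
    rw [hV, hU]
    calc swap21 K * swap21 J⁻¹ * (swap21 J * K)
        = swap21 K * (swap21 J⁻¹ * swap21 J) * K := by noncomm_ring
      _ = swap21 K * swap21 (J⁻¹ * J) * K := by rw [swap21_mul]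
      _ = swap21 K * K := by rw [hJl, swap21_one, mul_one]
      _ = 1 := hK2
  have hUV : U * V = 1 := by
    rw [hV, hU]
    calc swap21 J * K * (swap21 K * swap21 J⁻¹)
        = swap21 J * (K * swap21 K) * swap21 J⁻¹ := by noncomm_ring
      _ = swap21 J * swap21 J⁻¹ := by rw [hK1, mul_one]
      _ = swap21 (J * J⁻¹) := (swap21_mul _ _).symm
      _ = 1 := by rw [hJr, swap21_one]
  have hX : Pm n * RJ q T r0 = V * A * U := by
    rw [RJ, RbarJ, ← hJ, ← hK]
    calc Pm n * (K * (J⁻¹ * RsQ n q * swap21 J) * K)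
        = Pm n * (K * (J⁻¹ * (RsQ n q * (swap21 J * K)))) := by noncomm_ring
      _ = swap21 K * (Pm n * (J⁻¹ * (RsQ n q * (swap21 J * K)))) := Pm_shift _ _
      _ = swap21 K * (swap21 J⁻¹ * (Pm n * (RsQ n q * (swap21 J * K)))) := by rw [Pm_shift J⁻¹]
      _ = swap21 K * (swap21 J⁻¹ * (Pm n * RsQ n q * (swap21 J * K))) := by rw [mul_assoc (Pm n)]
      _ = V * A * U := by rw [hV, hU, hA]; noncomm_ring
  have hquad : (A - (q : ℂ) • (1 : MatT n)) * (A + (q : ℂ)⁻¹ • (1 : MatT n)) = 0 := by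
    have h2 : A * A = ((q : ℂ) - (q : ℂ)⁻¹) • A + 1 := hecke_sq q hq0
    have hqq : (q : ℂ) * (q : ℂ)⁻¹ = 1 := mul_inv_cancel₀ hq0
    rw [sub_mul, mul_add, mul_add, mul_smul_comm, mul_one, smul_mul_assoc, one_mul,
      smul_mul_assoc, one_mul, smul_smul, hqq, one_smul, h2, sub_smul]
    abel
  show (Pm n * RJ q T r0 - (q : ℂ) • (1 : MatT n))
      * (Pm n * RJ q T r0 + (q : ℂ)⁻¹ • (1 : MatT n)) = 0
  rw [hX]
  have e1 : V * A * U - (q : ℂ) • (1 : MatT n) = V * ((A - (q : ℂ) • (1 : MatT n)) * U) := by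
    rw [sub_mul, mul_sub, smul_mul_assoc, one_mul]
    rw [show V * (A * U) = V * A * U from (mul_assoc V A U).symm]
    rw [show V * ((q : ℂ) • U) = (q : ℂ) • (V * U) from mul_smul_comm _ _ _]
    rw [hVU]
  have e2 : V * A * U + (q : ℂ)⁻¹ • (1 : MatT n) = V * ((A + (q : ℂ)⁻¹ • (1 : MatT n)) * U) := by
    rw [add_mul, mul_add, smul_mul_assoc, one_mul]
    rw [show V * (A * U) = V * A * U from (mul_assoc V A U).symm]
    rw [show V * ((q : ℂ)⁻¹ • U) = (q : ℂ)⁻¹ • (V * U) from mul_smul_comm _ _ _]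
    rw [hVU]
  rw [e1, e2]
  calc V * ((A - (q : ℂ) • (1 : MatT n)) * U) * (V * ((A + (q : ℂ)⁻¹ • (1 : MatT n)) * U))
      = V * ((A - (q : ℂ) • (1 : MatT n)) * ((U * V) * ((A + (q : ℂ)⁻¹ • (1 : MatT n)) * U))) := by
        noncomm_ring
    _ = V * (((A - (q : ℂ) • (1 : MatT n)) * (A + (q : ℂ)⁻¹ • (1 : MatT n))) * U) := by
        rw [hUV, one_mul]; noncomm_ring
    _ = 0 := by rw [hquad, zero_mul, mul_zero]

end
end GGS
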